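/- For the indicator integrand h(u) = 1_{[a,b]}(u)·id on [0,t] with 0 ≤ a < b ≤ t, the kernel evaluates as: 𝒦_g(h)(t,s) = g(b,s) − g(a,s) when s < a; 𝒦_g(h)(t,s) = g(b,s) when a ≤ s ≤ b (interpreting g(s,s) via the kernel formula h(s)g(t,s) + ∫_s^t (h(u)−h(s))g(du,s) = g(t,s) − (g(t,s) − g(b,s)) = g(b,s)); and 𝒦_g(h)(t,s) = 0 when s > b. -/

import Mathlib

open Filter

/-- The operator-valued Riemann–Stieltjes integral `∫_a^b f(u) g(du)`, realized as the
limit of Riemann–Stieltjes sums along uniform partitions of `[a, b]`. -/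
noncomputable def rsInt {H₂ H₃ : Type*} [NormedAddCommGroup H₂] [NormedSpace ℝ H₂]
    [NormedAddCommGroup H₃] [NormedSpace ℝ H₃]
    (f : ℝ → H₂ →L[ℝ] H₃) (g : ℝ → H₂ →L[ℝ] H₂) (a b : ℝ) : H₂ →L[ℝ] H₃ :=
  haveI : Nonempty (H₂ →L[ℝ] H₃) := ⟨0⟩
  limUnder atTop (fun n : ℕ =>
    ∑ i ∈ Finset.range n,
      (f (a + i * (b - a) / n)).comp
        (g (a + (i + 1) * (b - a) / n) - g (a + i * (b - a) / n)))

/-- The Volterra integration kernel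
`𝒦_g(h)(t,s) = h(s) g(t,s) + ∫_s^t (h(u) − h(s)) g(du, s)`. -/
noncomputable def volterraKernel {H₂ H₃ : Type*} [NormedAddCommGroup H₂] [NormedSpace ℝ H₂]
    [NormedAddCommGroup H₃] [NormedSpace ℝ H₃]
    (h : ℝ → H₂ →L[ℝ] H₃) (g : ℝ → ℝ → H₂ →L[ℝ] H₂) (t s : ℝ) : H₂ →L[ℝ] H₃ :=
  (h s).comp (g t s) + rsInt (fun u => h u - h s) (fun u => g u s) s t

private lemma tele_sum {E : Type*} [AddCommGroup E] (F : ℕ → E) (m n : ℕ) (hm : m ≤ n)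
    (P : ℕ → Prop) [DecidablePred P] (hP : ∀ i < n, (P i ↔ i < m)) :
    ∑ i ∈ Finset.range n, (if P i then F (i + 1) - F i else 0) = F m - F 0 := by
  have h1 : ∀ i ∈ Finset.range n, (if P i then F (i + 1) - F i else 0)
      = (if i < m then F (i + 1) - F i else 0) := by
    intro i hi
    exact if_congr (hP i (Finset.mem_range.mp hi)) rfl rfl
  rw [Finset.sum_congr rfl h1, Finset.sum_ite, Finset.sum_const_zero, add_zero]
  have h2 : (Finset.range n).filter (fun i => i < m) = Finset.range m := by
    ext i; simp only [Finset.mem_filter, Finset.mem_range]; omega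
  rw [h2, Finset.sum_range_sub]

private lemma key_tendsto {E : Type*} [NormedAddCommGroup E]
    (G : ℝ → E) (s t c : ℝ) (hG : ContinuousAt G c)
    (P : ℝ → Prop) [DecidablePred P] (m : ℕ → ℕ) (hmn : ∀ n, m n ≤ n)
    (hP : ∀ n : ℕ, 0 < n → ∀ i, i < n → (P (s + i * (t - s) / n) ↔ i < m n))
    (hx : ∀ n : ℕ, 0 < n → |s + m n * (t - s) / n - c| ≤ (t - s) / n) :
    Tendsto (fun n : ℕ => ∑ i ∈ Finset.range n,
        (if P (s + i * (t - s) / n) then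
          G (s + (i + 1) * (t - s) / n) - G (s + i * (t - s) / n) else 0))
      atTop (nhds (G c - G s)) := by
  have hy : Tendsto (fun n : ℕ => s + m n * (t - s) / n) atTop (nhds c) := by
    rw [tendsto_iff_dist_tendsto_zero]
    have h0 : Tendsto (fun n : ℕ => (t - s) / n) atTop (nhds 0) :=
      tendsto_const_div_atTop_nhds_zero_nat (t - s)
    refine squeeze_zero' (Eventually.of_forall fun n => dist_nonneg) ?_ h0
    filter_upwards [eventually_gt_atTop 0] with n hn
    rw [Real.dist_eq]
    exact hx n hn
  have hGy : Tendsto (fun n : ℕ => G (s + m n * (t - s) / n)) atTop (nhds (G c)) :=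
    hG.tendsto.comp hy
  refine Tendsto.congr' ?_ (hGy.sub_const (G s))
  filter_upwards [eventually_gt_atTop 0] with n hn
  have := tele_sum (fun j : ℕ => G (s + j * (t - s) / n)) (m n) n (hmn n)
    (fun i => P (s + i * (t - s) / n)) (hP n hn)
  simp only [Nat.cast_add, Nat.cast_one, Nat.cast_zero, zero_mul, zero_div, add_zero] at this
  rw [← this]


private lemma le_iff_floor (s t b : ℝ) (hst : s < t) (hsb : s ≤ b) (hbt : b ≤ t)
    (n : ℕ) (hn : 0 < n) :
    (∀ i : ℕ, i < n → (s + i * (t - s) / n ≤ b ↔ i < min n (⌊(b - s) * n / (t - s)⌋₊ + 1))) ∧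
    |s + (min n (⌊(b - s) * n / (t - s)⌋₊ + 1) : ℕ) * (t - s) / n - b| ≤ (t - s) / n := by
  have hL : (0:ℝ) < t - s := by linarith
  have hn' : (0:ℝ) < n := by exact_mod_cast hn
  set r : ℝ := (b - s) * n / (t - s) with hr
  have hr0 : 0 ≤ r := by
    rw [hr]
    exact div_nonneg (mul_nonneg (by linarith) (Nat.cast_nonneg n)) (by linarith)
  have hkey : r * ((t - s) / n) = b - s := by rw [hr]; field_simp
  constructor
  · intro i hi
    have h1 : (s + i * (t - s) / n ≤ b) ↔ ((i : ℝ) ≤ r) := by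
      rw [hr, le_div_iff₀ hL]
      constructor <;> intro h
      · have : (i:ℝ) * (t - s) / n ≤ b - s := by linarith
        calc (i:ℝ) * (t - s) = ((i:ℝ) * (t - s) / n) * n := by field_simp
          _ ≤ (b - s) * n := by nlinarith
      · have : (i:ℝ) * (t - s) / n ≤ b - s := by
          rw [div_le_iff₀ hn']; nlinarith
        linarith
    rw [h1, Nat.lt_min]
    rw [← Nat.le_floor_iff hr0]
    omega
  · rcases le_or_gt (⌊r⌋₊ + 1) n with hc | hc
    · rw [min_eq_right hc]
      have h1 : r ≤ (⌊r⌋₊ : ℝ) + 1 := by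
        have := Nat.lt_floor_add_one r
        linarith
      have h2 : (⌊r⌋₊ : ℝ) ≤ r := Nat.floor_le hr0
      have hcast : ((⌊r⌋₊ + 1 : ℕ) : ℝ) = (⌊r⌋₊ : ℝ) + 1 := by push_cast; ring
      rw [hcast, abs_le]
      have hpos : (0:ℝ) < (t - s) / n := by positivity
      have e1 : b - s ≤ ((⌊r⌋₊:ℝ) + 1) * ((t - s) / n) := by
        have := mul_le_mul_of_nonneg_right h1 hpos.le
        rwa [hkey] at this
      have e2 : ((⌊r⌋₊:ℝ) + 1) * ((t - s) / n) ≤ (b - s) + (t - s) / n := by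
        calc ((⌊r⌋₊:ℝ) + 1) * ((t - s) / n) ≤ (r + 1) * ((t - s) / n) :=
              mul_le_mul_of_nonneg_right (by linarith) hpos.le
          _ = r * ((t - s) / n) + (t - s) / n := by ring
          _ = (b - s) + (t - s) / n := by rw [hkey]
      simp only [mul_div_assoc]
      constructor <;> linarith
    · rw [min_eq_left (le_of_lt hc)]
      have h3 : (n : ℝ) ≤ r := by
        have : n ≤ ⌊r⌋₊ := by omega
        calc (n:ℝ) ≤ (⌊r⌋₊ : ℝ) := by exact_mod_cast this
          _ ≤ r := Nat.floor_le hr0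
      have hbt' : t ≤ b := by
        have : (n:ℝ) * ((t-s)/n) ≤ r * ((t-s)/n) := by
          have hpos : (0:ℝ) < (t - s) / n := by positivity
          nlinarith
        rw [hkey] at this
        have : t - s ≤ b - s := by
          calc t - s = (n:ℝ) * ((t-s)/n) := by field_simp
            _ ≤ b - s := this
        linarith
      have hb : b = t := le_antisymm hbt hbt'
      have : s + (n:ℝ) * (t - s) / n = t := by field_simp; ring
      rw [this, hb, sub_self, abs_zero]
      positivity

private lemma lt_iff_ceil (s t a : ℝ) (hsa : s < a) (hat : a ≤ t)
    (n : ℕ) (hn : 0 < n) :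
    (⌈(a - s) * n / (t - s)⌉₊ ≤ n) ∧
    (∀ i : ℕ, i < n → (s + i * (t - s) / n < a ↔ i < ⌈(a - s) * n / (t - s)⌉₊)) ∧
    |s + (⌈(a - s) * n / (t - s)⌉₊ : ℕ) * (t - s) / n - a| ≤ (t - s) / n := by
  have hL : (0:ℝ) < t - s := by linarith
  have hn' : (0:ℝ) < n := by exact_mod_cast hn
  set r : ℝ := (a - s) * n / (t - s) with hr
  have hr0 : 0 ≤ r := by
    rw [hr]
    exact div_nonneg (mul_nonneg (by linarith) (Nat.cast_nonneg n)) (by linarith)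
  have hkey : r * ((t - s) / n) = a - s := by rw [hr]; field_simp
  refine ⟨?_, ?_, ?_⟩
  · rw [Nat.ceil_le]
    rw [hr, div_le_iff₀ hL]
    nlinarith
  · intro i hi
    have h1 : (s + i * (t - s) / n < a) ↔ ((i : ℝ) < r) := by
      rw [hr, lt_div_iff₀ hL]
      constructor <;> intro h
      · have : (i:ℝ) * (t - s) / n < a - s := by linarith
        calc (i:ℝ) * (t - s) = ((i:ℝ) * (t - s) / n) * n := by field_simp
          _ < (a - s) * n := by nlinarith
      · have : (i:ℝ) * (t - s) / n < a - s := by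
          rw [div_lt_iff₀ hn']; nlinarith
        linarith
    rw [h1, Nat.lt_ceil]
  · have h1 : r ≤ (⌈r⌉₊ : ℝ) := Nat.le_ceil r
    have h2 : (⌈r⌉₊ : ℝ) < r + 1 := Nat.ceil_lt_add_one hr0
    have hpos : (0:ℝ) < (t - s) / n := by positivity
    rw [abs_le]
    have e1 : a - s ≤ (⌈r⌉₊:ℝ) * ((t - s) / n) := by
      have := mul_le_mul_of_nonneg_right h1 hpos.le
      rwa [hkey] at this
    have e2 : (⌈r⌉₊:ℝ) * ((t - s) / n) ≤ (a - s) + (t - s) / n := by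
      calc (⌈r⌉₊:ℝ) * ((t - s) / n) ≤ (r + 1) * ((t - s) / n) :=
            mul_le_mul_of_nonneg_right (by linarith) hpos.le
        _ = r * ((t - s) / n) + (t - s) / n := by ring
        _ = (a - s) + (t - s) / n := by rw [hkey]
    simp only [mul_div_assoc]
    constructor <;> linarith

private lemma indicator_ite_split {E : Type*} [AddCommGroup E] (a b x : ℝ) (hab : a < b) (A : E) :
    (if x ∈ Set.Icc a b then A else 0)
      = (if x ≤ b then A else 0) - (if x < a then A else 0) := by
  simp only [Set.mem_Icc]
  by_cases h1 : x < a
  · rw [if_pos h1, if_pos (h1.le.trans hab.le), if_neg (fun h => absurd h.1 (not_le.mpr h1)),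
      sub_self]
  · rw [if_neg h1, sub_zero]
    push_neg at h1
    by_cases h2 : x ≤ b
    · rw [if_pos ⟨h1, h2⟩, if_pos h2]
    · rw [if_neg (fun h => absurd h.2 h2), if_neg h2]


/-- For the indicator integrand `h(u) = 1_{[a,b]}(u) • id` on `[0,t]` with
`0 ≤ a < b ≤ t`, the kernel evaluates as: `g(b,s) − g(a,s)` when `s < a`;
`g(b,s)` when `a ≤ s ≤ b`; and `0` when `s > b`. -/
theorem volterraKernel_indicator
    {H₂ : Type*} [NormedAddCommGroup H₂] [InnerProductSpace ℝ H₂] [CompleteSpace H₂]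
    [TopologicalSpace.SeparableSpace H₂]
    (T t a b : ℝ) (ha : 0 ≤ a) (hab : a < b) (hbt : b ≤ t) (htT : t ≤ T)
    (g : ℝ → ℝ → H₂ →L[ℝ] H₂) :
    ∀ s : ℝ, 0 ≤ s → s ≤ t →
      BoundedVariationOn (fun u => g u s) (Set.Icc s t) →
      ContinuousAt (fun u => g u s) a → ContinuousAt (fun u => g u s) b →
      ((s < a → volterraKernel
          (fun u => Set.indicator (Set.Icc a b) (fun _ => (1 : ℝ)) u •
            ContinuousLinearMap.id ℝ H₂) g t s = g b s - g a s) ∧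
       (a ≤ s → s ≤ b → volterraKernel
          (fun u => Set.indicator (Set.Icc a b) (fun _ => (1 : ℝ)) u •
            ContinuousLinearMap.id ℝ H₂) g t s = g b s) ∧
       (b < s → volterraKernel
          (fun u => Set.indicator (Set.Icc a b) (fun _ => (1 : ℝ)) u •
            ContinuousLinearMap.id ℝ H₂) g t s = 0)) := by
  intro s hs0 hst _hBV hca hcb
  set h : ℝ → H₂ →L[ℝ] H₂ :=
    fun u => Set.indicator (Set.Icc a b) (fun _ => (1 : ℝ)) u • ContinuousLinearMap.id ℝ H₂
    with hh
  set G : ℝ → H₂ →L[ℝ] H₂ := fun u => g u s with hG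
  have hcomp : ∀ (x : ℝ) (A : H₂ →L[ℝ] H₂),
      (h x).comp A = if x ∈ Set.Icc a b then A else 0 := by
    intro x A
    rw [hh]
    simp only [Set.indicator_apply]
    rw [apply_ite (fun c : ℝ => c • ContinuousLinearMap.id ℝ H₂), one_smul, zero_smul,
      apply_ite (fun B : H₂ →L[ℝ] H₂ => B.comp A), ContinuousLinearMap.id_comp,
      ContinuousLinearMap.zero_comp]
  refine ⟨?_, ?_, ?_⟩
  · -- Case 1 : s < a
    intro hsa
    have hstlt : s < t := lt_of_lt_of_le (hsa.trans hab) hbt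
    have hhs : h s = 0 := by
      rw [hh]
      simp only [Set.indicator_apply, Set.mem_Icc]
      rw [if_neg (fun hc => absurd hc.1 (not_le.mpr hsa)), zero_smul]
    have h1 := key_tendsto G s t b hcb (fun x => x ≤ b)
      (fun n => min n (⌊(b - s) * n / (t - s)⌋₊ + 1)) (fun n => min_le_left _ _)
      (fun n hn => (le_iff_floor s t b hstlt (by linarith) hbt n hn).1)
      (fun n hn => (le_iff_floor s t b hstlt (by linarith) hbt n hn).2)
    have h2 := key_tendsto G s t a hca (fun x => x < a)
      (fun n => ⌈(a - s) * n / (t - s)⌉₊)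
      (fun n => by
        rcases Nat.eq_zero_or_pos n with hn | hn
        · subst hn; simp
        · exact (lt_iff_ceil s t a hsa (by linarith) n hn).1)
      (fun n hn => (lt_iff_ceil s t a hsa (by linarith) n hn).2.1)
      (fun n hn => (lt_iff_ceil s t a hsa (by linarith) n hn).2.2)
    have hsum : Tendsto (fun n : ℕ => ∑ i ∈ Finset.range n,
        ((h (s + i * (t - s) / n) - h s).comp
          (G (s + (i + 1) * (t - s) / n) - G (s + i * (t - s) / n))))
        atTop (nhds ((G b - G s) - (G a - G s))) := by
      refine Tendsto.congr' ?_ (h1.sub h2)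
      filter_upwards with n
      rw [← Finset.sum_sub_distrib]
      refine Finset.sum_congr rfl fun i _ => ?_
      rw [hhs, sub_zero, hcomp, indicator_ite_split a b _ hab]
    have hrs : rsInt (fun u => h u - h s) (fun u => g u s) s t
        = (G b - G s) - (G a - G s) := by
      unfold rsInt
      exact hsum.limUnder_eq
    show (h s).comp (g t s) + rsInt (fun u => h u - h s) (fun u => g u s) s t = g b s - g a s
    rw [hrs, hhs, ContinuousLinearMap.zero_comp, zero_add]
    abel
  · -- Case 2 : a ≤ s ≤ b
    intro has hsb
    have hhs : h s = ContinuousLinearMap.id ℝ H₂ := by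
      rw [hh]
      simp only [Set.indicator_apply, Set.mem_Icc]
      rw [if_pos ⟨has, hsb⟩, one_smul]
    rcases eq_or_lt_of_le hst with hst' | hst'
    · -- s = t, hence b = s = t
      have hbs : b = t := le_antisymm hbt (hst' ▸ hsb)
      have hrs : rsInt (fun u => h u - h s) (fun u => g u s) s t = 0 := by
        unfold rsInt
        apply Tendsto.limUnder_eq
        have hz : ∀ n : ℕ, (∑ i ∈ Finset.range n,
            (((fun u => h u - h s) (s + i * (t - s) / n)).comp
              ((fun u => g u s) (s + (i + 1) * (t - s) / n)
                - (fun u => g u s) (s + i * (t - s) / n)))) = 0 := by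
          intro n
          apply Finset.sum_eq_zero
          intro i _
          have hts : t - s = 0 := by rw [← hst']; ring
          simp [hts]
        exact tendsto_const_nhds.congr fun n => (hz n).symm
      show (h s).comp (g t s) + rsInt (fun u => h u - h s) (fun u => g u s) s t = g b s
      rw [hrs, hhs, add_zero, ContinuousLinearMap.id_comp, hbs]
    · -- s < t
      have h1 := key_tendsto G s t b hcb (fun x => x ≤ b)
        (fun n => min n (⌊(b - s) * n / (t - s)⌋₊ + 1)) (fun n => min_le_left _ _)
        (fun n hn => (le_iff_floor s t b hst' hsb hbt n hn).1)
        (fun n hn => (le_iff_floor s t b hst' hsb hbt n hn).2)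
      have h2 : Tendsto (fun n : ℕ => ∑ i ∈ Finset.range n,
          (G (s + (i + 1) * (t - s) / n) - G (s + i * (t - s) / n)))
          atTop (nhds (G t - G s)) := by
        refine Tendsto.congr' ?_ tendsto_const_nhds
        filter_upwards [eventually_gt_atTop 0] with n hn
        have hn' : (n : ℝ) ≠ 0 := Nat.cast_ne_zero.mpr hn.ne'
        have := Finset.sum_range_sub (fun j : ℕ => G (s + j * (t - s) / n)) n
        simp only [Nat.cast_add, Nat.cast_one, Nat.cast_zero, zero_mul, zero_div,
          add_zero] at this
        rw [this, show s + (n:ℝ) * (t - s) / n = t from by field_simp; ring]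
      have hsum : Tendsto (fun n : ℕ => ∑ i ∈ Finset.range n,
          ((h (s + i * (t - s) / n) - h s).comp
            (G (s + (i + 1) * (t - s) / n) - G (s + i * (t - s) / n))))
          atTop (nhds ((G b - G s) - (G t - G s))) := by
        refine Tendsto.congr' ?_ (h1.sub h2)
        filter_upwards with n
        rw [← Finset.sum_sub_distrib]
        refine Finset.sum_congr rfl fun i _ => ?_
        have hax : a ≤ s + i * (t - s) / n := by
          have : (0:ℝ) ≤ i * (t - s) / n :=
            div_nonneg (mul_nonneg (Nat.cast_nonneg i) (by linarith)) (Nat.cast_nonneg n)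
          linarith
        rw [hhs, ContinuousLinearMap.sub_comp, ContinuousLinearMap.id_comp, hcomp]
        have : (if s + i * (t - s) / n ∈ Set.Icc a b
            then G (s + (i + 1) * (t - s) / n) - G (s + i * (t - s) / n) else 0)
            = (if s + i * (t - s) / n ≤ b
              then G (s + (i + 1) * (t - s) / n) - G (s + i * (t - s) / n) else 0) := by
          simp only [Set.mem_Icc]
          exact if_congr (and_iff_right hax) rfl rfl
        rw [this]
      have hrs : rsInt (fun u => h u - h s) (fun u => g u s) s t
          = (G b - G s) - (G t - G s) := by
        unfold rsInt
        exact hsum.limUnder_eq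
      show (h s).comp (g t s) + rsInt (fun u => h u - h s) (fun u => g u s) s t = g b s
      rw [hrs, hhs, ContinuousLinearMap.id_comp]
      show g t s + ((g b s - g s s) - (g t s - g s s)) = g b s
      abel
  · -- Case 3 : b < s
    intro hbs
    have hhx : ∀ x : ℝ, s ≤ x → h x = 0 := by
      intro x hx
      rw [hh]
      simp only [Set.indicator_apply, Set.mem_Icc]
      rw [if_neg (fun hc => absurd hc.2 (not_le.mpr (lt_of_lt_of_le hbs hx))), zero_smul]
    have hhs : h s = 0 := hhx s le_rfl
    have hrs : rsInt (fun u => h u - h s) (fun u => g u s) s t = 0 := by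
      unfold rsInt
      apply Tendsto.limUnder_eq
      have hz : ∀ n : ℕ, (∑ i ∈ Finset.range n,
          (((fun u => h u - h s) (s + i * (t - s) / n)).comp
            ((fun u => g u s) (s + (i + 1) * (t - s) / n)
              - (fun u => g u s) (s + i * (t - s) / n)))) = 0 := by
        intro n
        apply Finset.sum_eq_zero
        intro i _
        have hx : s ≤ s + i * (t - s) / n := by
          have : (0:ℝ) ≤ i * (t - s) / n :=
            div_nonneg (mul_nonneg (Nat.cast_nonneg i) (by linarith)) (Nat.cast_nonneg n)
          linarith
        simp only [hhx _ hx, hhs, sub_zero, ContinuousLinearMap.zero_comp]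
      exact tendsto_const_nhds.congr fun n => (hz n).symm
    show (h s).comp (g t s) + rsInt (fun u => h u - h s) (fun u => g u s) s t = 0
    rw [hrs, hhs, ContinuousLinearMap.zero_comp, zero_add]
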